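/- Every probability distribution on a finite set whose probabilities are all at most 1/K can be written as a convex combination (mixture) of uniform distributions on K-element subsets. -/

import Mathlib

open Finset

private lemma stmt6_uniform {X : Type*} [Fintype X] [DecidableEq X]
    (K : ℕ) (S : Finset X) (hScard : S.card = K)
    (P : X → ℝ) (hPS : ∀ x, P x = if x ∈ S then (1:ℝ)/K else 0) :
    ∃ w : Finset X → ℝ, (∀ T, 0 ≤ w T) ∧ (∀ T, w T ≠ 0 → T.card = K) ∧
      (∑ T : Finset X, w T) = 1 ∧
      ∀ x, P x = ∑ T : Finset X, w T * (if x ∈ T then (1 : ℝ) / K else 0) := by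
  refine ⟨fun T => if T = S then 1 else 0, ?_, ?_, ?_, ?_⟩
  · intro T; dsimp only; split_ifs <;> norm_num
  · intro T hT
    rcases eq_or_ne T S with h | h
    · subst h; exact hScard
    · simp [h] at hT
  · simp
  · intro x
    rw [hPS]
    simp only [ite_mul, one_mul, zero_mul]
    rw [Finset.sum_ite_eq' Finset.univ S (fun T => if x ∈ T then (1:ℝ)/K else 0)]
    simp

private lemma stmt6_aux {X : Type*} [Fintype X] [DecidableEq X]
    (K : ℕ) (hK : 0 < K) (hcard : K ≤ Fintype.card X) :
    ∀ n : ℕ, ∀ P : X → ℝ,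
      ((Finset.univ.filter (fun x => P x ≠ 0 ∧ P x ≠ 1/(K:ℝ))).card ≤ n) →
      (∀ x, 0 ≤ P x) → (∑ x, P x = 1) → (∀ x, P x ≤ 1/(K:ℝ)) →
      ∃ w : Finset X → ℝ, (∀ T, 0 ≤ w T) ∧ (∀ T, w T ≠ 0 → T.card = K) ∧
        (∑ T : Finset X, w T) = 1 ∧
        ∀ x, P x = ∑ T : Finset X, w T * (if x ∈ T then (1 : ℝ) / K else 0) := by
  have hK0 : (0:ℝ) < K := by exact_mod_cast hK
  intro n
  induction n with
  | zero =>
    intro P hD hP hsum hbound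
    have hDe : (Finset.univ.filter (fun x => P x ≠ 0 ∧ P x ≠ 1/(K:ℝ))) = ∅ :=
      Finset.card_eq_zero.mp (Nat.le_zero.mp hD)
    have hext : ∀ x : X, P x = 0 ∨ P x = 1/(K:ℝ) := by
      intro x
      by_contra h
      push_neg at h
      have : x ∈ (Finset.univ.filter (fun x => P x ≠ 0 ∧ P x ≠ 1/(K:ℝ))) :=
        Finset.mem_filter.mpr ⟨Finset.mem_univ x, h⟩
      rw [hDe] at this; simp at this
    set S := Finset.univ.filter (fun x => P x = 1/(K:ℝ)) with hS
    have hPS : ∀ x, P x = if x ∈ S then (1:ℝ)/K else 0 := by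
      intro x
      by_cases hx : x ∈ S
      · simpa [hS] using (Finset.mem_filter.mp hx).2 ▸ by simp [hx]
      · simp only [hx, if_neg, if_false]
        rcases hext x with h | h
        · exact h
        · exact absurd (by simp [hS, h]) hx
    have hsum' : (S.card : ℝ) * (1/(K:ℝ)) = 1 := by
      have : ∑ x, P x = ∑ x, (if x ∈ S then (1:ℝ)/K else 0) :=
        Finset.sum_congr rfl (fun x _ => hPS x)
      rw [hsum] at this
      rw [Finset.sum_ite_mem, Finset.univ_inter, Finset.sum_const, nsmul_eq_mul] at this
      linarith [this]
    have hScard : S.card = K := by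
      have h : (S.card : ℝ) = K := by
        field_simp at hsum'
        exact_mod_cast hsum'
      exact_mod_cast h
    exact stmt6_uniform K S hScard P hPS
  | succ n ih =>
    intro P hD hP hsum hbound
    -- support and the set of maximal points
    set supp := Finset.univ.filter (fun x => P x ≠ 0) with hsupp
    set A := Finset.univ.filter (fun x => P x = 1/(K:ℝ)) with hA
    have hAsupp : A ⊆ supp := by
      intro x hx
      rw [hA, Finset.mem_filter] at hx
      rw [hsupp, Finset.mem_filter]
      refine ⟨Finset.mem_univ x, ?_⟩
      rw [hx.2]; positivity
    have hsuppK : K ≤ supp.card := by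
      by_contra h
      push_neg at h
      have h1 : ∑ x, P x ≤ ∑ x ∈ supp, (1/(K:ℝ)) := by
        rw [show ∑ x, P x = ∑ x ∈ supp, P x from
          (Finset.sum_filter_ne_zero Finset.univ).symm]
        exact Finset.sum_le_sum (fun x _ => hbound x)
      rw [hsum, Finset.sum_const, nsmul_eq_mul] at h1
      have h2 : (supp.card : ℝ) ≤ (K:ℝ) - 1 := by
        have : supp.card ≤ K - 1 := Nat.le_sub_one_of_lt h
        have := (Nat.cast_le (α := ℝ)).mpr this
        rw [Nat.cast_sub hK] at this
        simpa using this
      have h5 : (supp.card : ℝ) * (1/(K:ℝ)) ≤ ((K:ℝ)-1) * (1/(K:ℝ)) := by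
        apply mul_le_mul_of_nonneg_right h2; positivity
      have hinv : (K:ℝ) * (1/(K:ℝ)) = 1 := by field_simp
      have h6 : (0:ℝ) < 1/(K:ℝ) := by positivity
      nlinarith [h1, h5, hinv, h6]
    have hAK : A.card ≤ K := by
      by_contra h
      push_neg at h
      have h1 : ∑ x ∈ A, P x ≤ ∑ x, P x := by
        apply Finset.sum_le_sum_of_subset_of_nonneg (Finset.subset_univ A)
        intro x _ _; exact hP x
      have h2 : ∑ x ∈ A, P x = (A.card : ℝ) * (1/(K:ℝ)) := by
        rw [Finset.sum_congr rfl (fun x hx => (Finset.mem_filter.mp hx).2),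
          Finset.sum_const, nsmul_eq_mul]
      have h3 : (K:ℝ) + 1 ≤ (A.card : ℝ) := by exact_mod_cast h
      rw [hsum, h2] at h1
      have h4 : (0:ℝ) < 1/(K:ℝ) := by positivity
      have hinv : (K:ℝ) * (1/(K:ℝ)) = 1 := by field_simp
      nlinarith [h1, mul_le_mul_of_nonneg_right h3 h4.le, hinv, h4]
    obtain ⟨S, hAS, hSsupp, hScard⟩ :=
      Finset.exists_subsuperset_card_eq (n := K - A.card + A.card) hAsupp (by omega) (by omega)
    rw [Nat.sub_add_cancel hAK] at hScard
    have hSpos : ∀ x ∈ S, 0 < P x := by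
      intro x hx
      have := hSsupp hx
      rw [hsupp, Finset.mem_filter] at this
      exact lt_of_le_of_ne (hP x) (Ne.symm this.2)
    have hSout : ∀ x, x ∉ S → P x < 1/(K:ℝ) := by
      intro x hx
      refine lt_of_le_of_ne (hbound x) (fun h => hx (hAS ?_))
      rw [hA, Finset.mem_filter]; exact ⟨Finset.mem_univ x, h⟩
    have hXne : (Finset.univ : Finset X).Nonempty := by
      rw [Finset.univ_nonempty_iff]
      have : 0 < Fintype.card X := lt_of_lt_of_le hK hcard
      exact Fintype.card_pos_iff.mp this
    set f : X → ℝ := fun x => if x ∈ S then (K:ℝ) * P x else 1 - (K:ℝ) * P x with hf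
    set α := Finset.univ.inf' hXne f with hα
    have hKinv : (K:ℝ) * (1/(K:ℝ)) = 1 := by field_simp
    have hfin : ∀ x ∈ S, f x = (K:ℝ) * P x := by
      intro x hx; simp only [hf, hx, if_true]
    have hfout : ∀ x, x ∉ S → f x = 1 - (K:ℝ) * P x := by
      intro x hx; simp only [hf, hx, if_false]
    have hαle : ∀ x : X, α ≤ f x := fun x => Finset.inf'_le f (Finset.mem_univ x)
    have hfpos : ∀ x, 0 < f x := by
      intro x
      by_cases hx : x ∈ S
      · rw [hfin x hx]
        exact mul_pos hK0 (hSpos x hx)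
      · rw [hfout x hx]
        have h := hSout x hx
        have := mul_lt_mul_of_pos_left h hK0
        rw [hKinv] at this
        linarith
    have hα0 : 0 < α := by
      rw [hα, Finset.lt_inf'_iff]
      exact fun x _ => hfpos x
    have hSne : S.Nonempty := by
      rw [← Finset.card_pos, hScard]; exact hK
    obtain ⟨x₁, hx₁⟩ := hSne
    have hα1 : α ≤ 1 := by
      have h1 := hαle x₁
      rw [hfin x₁ hx₁] at h1
      have h2 := mul_le_mul_of_nonneg_left (hbound x₁) hK0.le
      rw [hKinv] at h2
      linarith
    rcases eq_or_lt_of_le hα1 with hαeq | hαlt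
    · -- α = 1 : P is already uniform on S
      have hPS : ∀ x, P x = if x ∈ S then (1:ℝ)/K else 0 := by
        intro x
        have h1 : (1:ℝ) ≤ f x := hαeq ▸ hαle x
        by_cases hx : x ∈ S
        · simp only [hx, if_true]
          rw [hfin x hx] at h1
          have h2 := mul_le_mul_of_nonneg_left (hbound x) hK0.le
          rw [hKinv] at h2
          have h3 : (K:ℝ) * P x = 1 := le_antisymm h2 h1
          rw [eq_div_iff (ne_of_gt hK0)]
          linarith
        · simp only [hx, if_false]
          rw [hfout x hx] at h1
          have h2 : (K:ℝ) * P x ≤ 0 := by linarith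
          have h3 := hP x
          have h4 : P x ≤ 0 := by
            by_contra hc
            push_neg at hc
            nlinarith
          linarith
      exact stmt6_uniform K S hScard P hPS
    · -- α < 1 : peel off α · uniform(S)
      have h1α : 0 < 1 - α := by linarith
      set P' : X → ℝ := fun x => (P x - (if x ∈ S then α/(K:ℝ) else 0))/(1-α) with hP'
      have hP'in : ∀ x ∈ S, P' x = (P x - α/(K:ℝ))/(1-α) := by
        intro x hx; simp only [hP', hx, if_true]
      have hP'out : ∀ x, x ∉ S → P' x = P x/(1-α) := by
        intro x hx; simp only [hP', hx, if_false, sub_zero]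
      have hinS : ∀ x ∈ S, α ≤ (K:ℝ) * P x := by
        intro x hx
        have h := hαle x
        rwa [hfin x hx] at h
      have houtS : ∀ x, x ∉ S → (K:ℝ) * P x ≤ 1 - α := by
        intro x hx
        have h := hαle x
        rw [hfout x hx] at h
        linarith
      have hP'nn : ∀ x, 0 ≤ P' x := by
        intro x
        by_cases hx : x ∈ S
        · rw [hP'in x hx]
          apply div_nonneg _ h1α.le
          have := hinS x hx
          rw [sub_nonneg, div_le_iff₀ hK0]
          linarith
        · rw [hP'out x hx]
          exact div_nonneg (hP x) h1α.le
      have hP'sum : ∑ x, P' x = 1 := by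
        simp only [hP']
        rw [← Finset.sum_div, Finset.sum_sub_distrib, hsum,
          Finset.sum_ite_mem, Finset.univ_inter, Finset.sum_const, nsmul_eq_mul, hScard]
        field_simp
      have hP'bd : ∀ x, P' x ≤ 1/(K:ℝ) := by
        intro x
        by_cases hx : x ∈ S
        · rw [hP'in x hx, div_le_div_iff₀ h1α hK0]
          have h2 := mul_le_mul_of_nonneg_left (hbound x) hK0.le
          rw [hKinv] at h2
          have h3 : (K:ℝ) * (α/(K:ℝ)) = α := by field_simp
          nlinarith [h2, h3]
        · rw [hP'out x hx, div_le_div_iff₀ h1α hK0]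
          have := houtS x hx
          linarith
      -- the strict decrease of the non-extreme set
      obtain ⟨x₀, _, hx₀⟩ := Finset.exists_mem_eq_inf' hXne f
      have hαx₀ : α = f x₀ := by rw [hα]; exact hx₀
      have hDsub : (Finset.univ.filter (fun x => P' x ≠ 0 ∧ P' x ≠ 1/(K:ℝ))) ⊆
          (Finset.univ.filter (fun x => P x ≠ 0 ∧ P x ≠ 1/(K:ℝ))).erase x₀ := by
        intro x hx
        rw [Finset.mem_filter] at hx
        rw [Finset.mem_erase, Finset.mem_filter]
        constructor
        · -- x ≠ x₀
          intro hxx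
          subst hxx
          by_cases hxS : x ∈ S
          · have hPx : (K:ℝ) * P x = α := by rw [hαx₀, hfin x hxS]
            have : P' x = 0 := by
              rw [hP'in x hxS]
              rw [div_eq_zero_iff]
              left
              rw [sub_eq_zero, eq_div_iff (ne_of_gt hK0)]
              linarith
            exact hx.2.1 this
          · have hPx : 1 - (K:ℝ) * P x = α := by rw [hαx₀, hfout x hxS]
            have : P' x = 1/(K:ℝ) := by
              rw [hP'out x hxS]
              rw [div_eq_div_iff (ne_of_gt h1α) (ne_of_gt hK0)]
              linarith
            exact hx.2.2 this
        · refine ⟨Finset.mem_univ x, ?_, ?_⟩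
          · intro h0
            by_cases hxS : x ∈ S
            · exact absurd h0 (ne_of_gt (hSpos x hxS))
            · apply hx.2.1
              rw [hP'out x hxS, h0, zero_div]
          · intro h1
            have hxS : x ∈ S := hAS (by rw [hA, Finset.mem_filter]; exact ⟨Finset.mem_univ x, h1⟩)
            apply hx.2.2
            rw [hP'in x hxS, h1, div_eq_div_iff (ne_of_gt h1α) (ne_of_gt hK0)]
            field_simp
      have hDcard : (Finset.univ.filter (fun x => P' x ≠ 0 ∧ P' x ≠ 1/(K:ℝ))).card ≤ n := by
        have hx₀mem : x₀ ∈ Finset.univ.filter (fun x => P x ≠ 0 ∧ P x ≠ 1/(K:ℝ)) := by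
          rw [Finset.mem_filter]
          refine ⟨Finset.mem_univ x₀, ?_, ?_⟩
          · by_cases hxS : x₀ ∈ S
            · exact ne_of_gt (hSpos x₀ hxS)
            · have hPx : 1 - (K:ℝ) * P x₀ = α := by rw [hαx₀, hfout x₀ hxS]
              intro h0
              rw [h0, mul_zero, sub_zero] at hPx
              linarith
          · intro h1
            by_cases hxS : x₀ ∈ S
            · have hPx : (K:ℝ) * P x₀ = α := by rw [hαx₀, hfin x₀ hxS]
              rw [h1, hKinv] at hPx
              linarith
            · exact absurd (hSout x₀ hxS) (by rw [h1]; simp)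
        calc (Finset.univ.filter (fun x => P' x ≠ 0 ∧ P' x ≠ 1/(K:ℝ))).card
            ≤ ((Finset.univ.filter (fun x => P x ≠ 0 ∧ P x ≠ 1/(K:ℝ))).erase x₀).card :=
              Finset.card_le_card hDsub
          _ = (Finset.univ.filter (fun x => P x ≠ 0 ∧ P x ≠ 1/(K:ℝ))).card - 1 :=
              Finset.card_erase_of_mem hx₀mem
          _ ≤ n := by omega
      obtain ⟨w', hw'0, hw'K, hw'sum, hw'P⟩ := ih P' hDcard hP'nn hP'sum hP'bd
      refine ⟨fun T => (1-α) * w' T + (if T = S then α else 0), ?_, ?_, ?_, ?_⟩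
      · intro T
        dsimp only
        have := hw'0 T
        split_ifs <;> nlinarith
      · intro T hT
        dsimp only at hT
        by_cases hTS : T = S
        · rw [hTS]; exact hScard
        · apply hw'K
          intro h0
          apply hT
          simp [hTS, h0]
      · rw [Finset.sum_add_distrib, ← Finset.mul_sum, hw'sum]
        simp
      · intro x
        have key := hw'P x
        have hsplit : ∀ T ∈ Finset.univ,
            ((1-α) * w' T + (if T = S then α else 0)) * (if x ∈ T then (1:ℝ)/K else 0)
            = (1-α) * (w' T * (if x ∈ T then (1:ℝ)/K else 0))
              + (if T = S then α else 0) * (if x ∈ T then (1:ℝ)/K else 0) := by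
          intro T _; ring
        rw [Finset.sum_congr rfl hsplit, Finset.sum_add_distrib, ← Finset.mul_sum, ← key]
        have h2 : ∑ T : Finset X, (if T = S then α else 0) * (if x ∈ T then (1:ℝ)/K else 0)
            = α * (if x ∈ S then (1:ℝ)/K else 0) := by
          rw [Finset.sum_eq_single S (fun T _ hTS => by simp [hTS])
            (fun h => absurd (Finset.mem_univ S) h)]
          simp
        rw [h2]
        by_cases hx : x ∈ S
        · rw [hP'in x hx]
          simp only [hx, if_true]
          field_simp
          ring
        · rw [hP'out x hx]
          simp only [hx, if_false, mul_zero, add_zero]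
          field_simp

theorem stmt_6 {X : Type*} [Fintype X] [DecidableEq X]
    (K : ℕ) (hK : 0 < K) (hcard : K ≤ Fintype.card X)
    (P : X → ℝ) (hP : ∀ x, 0 ≤ P x) (hsum : ∑ x, P x = 1)
    (hbound : ∀ x, P x ≤ 1 / K) :
    ∃ w : Finset X → ℝ, (∀ S, 0 ≤ w S) ∧ (∀ S, w S ≠ 0 → S.card = K) ∧
      (∑ S : Finset X, w S) = 1 ∧
      ∀ x, P x = ∑ S : Finset X, w S * (if x ∈ S then (1 : ℝ) / K else 0) := by
  exact stmt6_aux K hK hcard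
    ((Finset.univ.filter (fun x => P x ≠ 0 ∧ P x ≠ 1/(K:ℝ))).card) P le_rfl hP hsum hbound
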